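/- For every locally convex space E over ℝ, the map p : E' → Ê defined by p(f) = exp(2πi f) is a group isomorphism between the topological dual space E' (as an additive group) and the group Ê of continuous characters of E. -/

import Mathlib

open Real

open Filter Topology Pointwise

private lemma circle_exp_inj' {a b : ℝ} (ha : |a| < π) (hb : |b| < π)
    (h : Circle.exp a = Circle.exp b) : a = b := by
  have hpi := Real.pi_pos
  obtain ⟨m, hm⟩ := Circle.exp_eq_exp.mp h
  have hab : |a - b| < 2 * π := by
    calc |a - b| ≤ |a| + |b| := abs_sub _ _
    _ < 2 * π := by linarith
  rw [hm, add_sub_cancel_left, abs_mul, abs_of_pos (by linarith : (0:ℝ) < 2*π)] at hab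
  have hmabs : |(m:ℝ)| < 1 := by nlinarith [abs_nonneg (m:ℝ)]
  have : m = 0 := by exact_mod_cast Int.abs_lt_one_iff.mp (by exact_mod_cast hmabs)
  simp [this] at hm; linarith

private lemma circle_exp_nat_mul' (t : ℝ) (n : ℕ) :
    Circle.exp ((n:ℝ) * t) = Circle.exp t ^ n := by
  induction n with
  | zero => simp
  | succ n ih => push_cast; rw [add_mul, one_mul, Circle.exp_add, ih, pow_succ]

theorem exists_lift' {E : Type*} [AddCommGroup E] [Module ℝ E] [TopologicalSpace E]
    [IsTopologicalAddGroup E] [ContinuousSMul ℝ E]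
    (χ : E → Circle) (hcχ : Continuous χ) (hm : ∀ x y, χ (x + y) = χ x * χ y) :
    ∃ f : E →L[ℝ] ℝ, ∀ x, χ x = Circle.exp (2 * π * f x) := by
  have hpi := Real.pi_pos
  have χ0 : χ 0 = 1 := by
    have h := hm 0 0
    rw [add_zero] at h
    exact (left_eq_mul.mp h)
  have χnat : ∀ (n : ℕ) (y : E), χ ((n : ℝ) • y) = χ y ^ n := by
    intro n y
    induction n with
    | zero => simpa using χ0
    | succ n ih =>
        have h1 : ((n+1 : ℕ) : ℝ) • y = (n:ℝ) • y + y := by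
          push_cast; rw [add_smul, one_smul]
        rw [h1, hm, ih, pow_succ]
  have χhalf : ∀ y : E, χ y = χ ((2:ℝ)⁻¹ • y) * χ ((2:ℝ)⁻¹ • y) := by
    intro y
    rw [← hm]
    congr 1
    rw [← add_smul]; norm_num
  set c : E → ℕ → E := fun x n => ((2:ℝ)^n)⁻¹ • x with hc_def
  have hc_succ : ∀ x n, c x (n+1) = (2:ℝ)⁻¹ • c x n := by
    intro x n
    simp only [hc_def, smul_smul]
    congr 1
    rw [← mul_inv, ← pow_succ']
  set a : E → ℕ → ℝ := fun x n => 2^n * Complex.arg (χ (c x n)) with ha_def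
  have hdouble : ∀ y : E, |Complex.arg (χ ((2:ℝ)⁻¹ • y))| < π/2 →
      Complex.arg (χ y) = 2 * Complex.arg (χ ((2:ℝ)⁻¹ • y)) := by
    intro y hy
    set t := Complex.arg (χ ((2:ℝ)⁻¹ • y)) with ht
    rw [abs_lt] at hy
    have h1 : χ y = Circle.exp (t + t) := by
      rw [χhalf y, Circle.exp_add, ht, Circle.exp_arg]
    rw [h1, Circle.arg_exp (by linarith) (by linarith)]
    ring
  -- balanced neighborhood on which χ has positive real part
  have hV : χ ⁻¹' {z : Circle | 0 < (z : ℂ).re} ∈ 𝓝 (0 : E) := by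
    refine (IsOpen.preimage hcχ ?_).mem_nhds ?_
    · exact (isOpen_lt continuous_const Complex.continuous_re).preimage continuous_subtype_val
    · simp [χ0]
  obtain ⟨W, ⟨hWn, hWb⟩, hWs⟩ := (nhds_basis_balanced ℝ E).mem_iff.mp hV
  have hargW : ∀ y ∈ W, |Complex.arg (χ y)| < π/2 := fun y hy =>
    Complex.abs_arg_lt_pi_div_two_iff.mpr (Or.inl (hWs hy))
  -- stabilization
  have hstab : ∀ x N, (∀ n, N ≤ n → c x n ∈ W) → ∀ n, N ≤ n → a x n = a x N := by
    intro x N hmem n hn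
    induction n, hn using Nat.le_induction with
    | base => rfl
    | succ n hn ih =>
        have hW' : c x (n+1) ∈ W := hmem _ (by omega)
        have harg : |Complex.arg (χ ((2:ℝ)⁻¹ • c x n))| < π/2 := by
          rw [← hc_succ]; exact hargW _ hW'
        have hd := hdouble (c x n) harg
        have e1 : a x (n+1) = 2^(n+1) * Complex.arg (χ ((2:ℝ)⁻¹ • c x n)) := by
          simp only [ha_def]; rw [hc_succ]
        have e2 : a x n = 2^n * (2 * Complex.arg (χ ((2:ℝ)⁻¹ • c x n))) := by
          simp only [ha_def]; rw [hd]
        rw [← ih, e1, e2]; ring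
  -- eventual membership
  have hp2 : Tendsto (fun n : ℕ => ((2:ℝ)^n)⁻¹) atTop (𝓝 0) := by
    simpa [inv_pow] using
      tendsto_pow_atTop_nhds_zero_of_lt_one (by norm_num : (0:ℝ) ≤ 2⁻¹) (by norm_num)
  have hev : ∀ x : E, ∃ N, ∀ n, N ≤ n → c x n ∈ W := by
    intro x
    have h2 : Tendsto (fun n : ℕ => c x n) atTop (𝓝 0) := by
      simpa using hp2.smul_const x
    exact eventually_atTop.mp (h2.eventually_mem hWn)
  set f0 : E → ℝ := fun x => limUnder atTop (a x) with hf0_def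
  have huseN : ∀ x N, (∀ n, N ≤ n → c x n ∈ W) → f0 x = a x N := by
    intro x N hN
    have ht : Tendsto (a x) atTop (𝓝 (a x N)) := by
      refine Tendsto.congr' ?_ tendsto_const_nhds
      filter_upwards [eventually_ge_atTop N] with n hn
      exact (hstab x N hN n hn).symm
    exact ht.limUnder_eq
  -- value identity
  have hval : ∀ x, χ x = Circle.exp (f0 x) := by
    intro x
    obtain ⟨N, hN⟩ := hev x
    rw [huseN x N hN]
    have hx : ((2:ℝ)^N) • c x N = x := by
      simp only [hc_def]; rw [smul_inv_smul₀ (by positivity)]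
    have h1 : χ x = χ (c x N) ^ (2^N : ℕ) := by
      rw [← χnat (2^N) (c x N)]
      rw [show (((2:ℕ)^N : ℕ) : ℝ) = (2:ℝ)^N by push_cast; ring, hx]
    have h2 : Circle.exp (a x N)
        = Circle.exp (Complex.arg (χ (c x N))) ^ (2^N : ℕ) := by
      rw [← circle_exp_nat_mul']
      simp only [ha_def]
      norm_num
    rw [h1, h2, Circle.exp_arg]
  -- additivity
  have hadd : ∀ x y, f0 (x + y) = f0 x + f0 y := by
    intro x y
    obtain ⟨N₁, h1⟩ := hev x
    obtain ⟨N₂, h2⟩ := hev y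
    obtain ⟨N₃, h3⟩ := hev (x+y)
    set N := max N₁ (max N₂ N₃) with hNdef
    have hx : c x N ∈ W := h1 N (le_max_left _ _)
    have hy : c y N ∈ W := h2 N (le_trans (le_max_left _ _) (le_max_right _ _))
    have hxy : c (x+y) N ∈ W := h3 N (le_trans (le_max_right _ _) (le_max_right _ _))
    have hsplit : c (x+y) N = c x N + c y N := by simp [hc_def, smul_add]
    have harg : Complex.arg (χ (c (x+y) N)) =
        Complex.arg (χ (c x N)) + Complex.arg (χ (c y N)) := by
      apply circle_exp_inj'
      · exact lt_trans (hargW _ hxy) (by linarith)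
      · have hhx := hargW _ hx
        have hhy := hargW _ hy
        calc |Complex.arg (χ (c x N)) + Complex.arg (χ (c y N))|
            ≤ |Complex.arg (χ (c x N))| + |Complex.arg (χ (c y N))| := abs_add_le _ _
          _ < π := by linarith
      · rw [Circle.exp_arg, Circle.exp_add, Circle.exp_arg, Circle.exp_arg, hsplit, hm]
    rw [huseN (x+y) N (fun n hn => h3 n (le_trans (le_trans (le_max_right _ _) (le_max_right _ _)) hn)),
        huseN x N (fun n hn => h1 n (le_trans (le_max_left _ _) hn)),
        huseN y N (fun n hn => h2 n (le_trans (le_trans (le_max_left _ _) (le_max_right _ _)) hn))]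
    simp only [ha_def]
    rw [harg]; ring
  -- halving homogeneity
  have hhalfpow : ∀ (x : E) (k : ℕ), f0 (c x k) = f0 x / 2^k := by
    intro x k
    obtain ⟨N, hN⟩ := hev x
    have hcc : ∀ n, c (c x k) n = c x (n + k) := by
      intro n
      simp only [hc_def, smul_smul]
      congr 1
      rw [← mul_inv, ← pow_add]
    have hmem : ∀ n, N ≤ n → c (c x k) n ∈ W := fun n hn => by
      rw [hcc]; exact hN _ (by omega)
    rw [huseN _ N hmem, huseN x (N + k) (fun n hn => hN n (by omega))]
    simp only [ha_def]
    rw [hcc]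
    rw [pow_add]
    field_simp
  -- bound on W
  have hbound : ∀ x ∈ W, |f0 x| < π/2 := by
    intro x hx
    have hmem : ∀ n, 0 ≤ n → c x n ∈ W := by
      intro n _
      refine hWb.smul_mem ?_ hx
      rw [norm_inv, norm_pow, Real.norm_two]
      rw [inv_le_one₀ (by positivity)]
      exact one_le_pow₀ (by norm_num)
    rw [huseN x 0 hmem]
    simp only [ha_def, hc_def, pow_zero, inv_one, one_smul, one_mul]
    exact hargW x hx
  -- continuity at 0
  have hcont0 : Tendsto f0 (𝓝 0) (𝓝 0) := by
    rw [NormedAddCommGroup.tendsto_nhds_zero]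
    intro ε hε
    obtain ⟨k, hk⟩ : ∃ k : ℕ, π/2 * ((2:ℝ)^k)⁻¹ < ε := by
      have ht : Tendsto (fun k : ℕ => π/2 * ((2:ℝ)^k)⁻¹) atTop (𝓝 0) := by
        simpa using hp2.const_mul (π/2)
      exact (ht.eventually (gt_mem_nhds hε)).exists
    have hWk : (((2:ℝ)^k)⁻¹ • W : Set E) ∈ 𝓝 0 := by
      rw [set_smul_mem_nhds_zero_iff (by positivity : ((2:ℝ)^k)⁻¹ ≠ (0:ℝ))]
      exact hWn
    filter_upwards [hWk] with z hz
    obtain ⟨w, hw, rfl⟩ := hz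
    have he : f0 (((2:ℝ)^k)⁻¹ • w) = f0 w / 2^k := hhalfpow w k
    rw [Real.norm_eq_abs, he, abs_div, abs_of_pos (by positivity : (0:ℝ) < (2:ℝ)^k)]
    calc |f0 w| / 2^k < (π/2) / 2^k := by gcongr; exact hbound w hw
      _ < ε := by rw [div_eq_mul_inv]; exact hk
  -- bundle
  set fhom : E →+ ℝ := AddMonoidHom.mk' f0 hadd with hfhom_def
  have hcont : Continuous fhom := by
    refine continuous_of_continuousAt_zero fhom ?_
    rw [ContinuousAt, map_zero]
    exact hcont0
  refine ⟨(2*π)⁻¹ • fhom.toRealLinearMap hcont, fun x => ?_⟩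
  rw [hval x]
  congr 1
  have hπ : (2*π) ≠ 0 := by positivity
  have hfx : (fhom.toRealLinearMap hcont) x = f0 x := rfl
  rw [ContinuousLinearMap.smul_apply, hfx, smul_eq_mul]
  field_simp

/-- for every real locally convex space `E`, the map `p : E' → Ê`,
`p(f) = exp(2πif)`, is a group isomorphism between the topological dual `E'` (as an
additive group) and the group `Ê` of continuous characters of `E` (pointwise
multiplication). -/
theorem stmt4 {E : Type*} [AddCommGroup E] [Module ℝ E] [TopologicalSpace E]
    [IsTopologicalAddGroup E] [ContinuousSMul ℝ E] [LocallyConvexSpace ℝ E] :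
    ∃ p : (E →L[ℝ] ℝ) →
        {χ : E → Circle // Continuous χ ∧ ∀ x y, χ (x + y) = χ x * χ y},
      (∀ f : E →L[ℝ] ℝ, ∀ x : E,
          ((p f).1 x : ℂ) = Complex.exp (2 * Real.pi * Complex.I * (f x : ℂ))) ∧
      Function.Bijective p ∧
      (∀ f g : E →L[ℝ] ℝ, ∀ x : E, (p (f + g)).1 x = (p f).1 x * (p g).1 x) := by
  have hpi := Real.pi_pos
  refine ⟨fun f => ⟨fun x => Circle.exp (2 * π * f x),
      Circle.exp.continuous.comp (continuous_const.mul f.continuous), fun x y => by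
        simp only [map_add, mul_add, Circle.exp_add]⟩, ?_, ⟨?_, ?_⟩, ?_⟩
  · intro f x
    rw [Circle.coe_exp]
    push_cast
    ring_nf
  · -- injective
    intro f g h
    have hval : ∀ x : E, Circle.exp (2 * π * f x) = Circle.exp (2 * π * g x) :=
      fun x => congrFun (congrArg Subtype.val h) x
    have hint : ∀ x : E, ∃ m : ℤ, f x - g x = m := by
      intro x
      obtain ⟨m, hm⟩ := Circle.exp_eq_exp.mp (hval x)
      exact ⟨m, by
        have : 2 * π * f x - 2 * π * g x = m * (2 * π) := by linarith
        have h2 : 2 * π * (f x - g x) = 2 * π * m := by linarith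
        have := mul_left_cancel₀ (by positivity : (2*π:ℝ) ≠ 0) h2
        linarith⟩
    ext x
    by_contra hne
    have hd : f x - g x ≠ 0 := sub_ne_zero.mpr hne
    set y := (2 * (f x - g x))⁻¹ • x with hy
    have hfy : f y - g y = 2⁻¹ := by
      rw [hy, map_smul, map_smul, smul_eq_mul, smul_eq_mul, ← mul_sub,
        mul_inv, mul_assoc, inv_mul_cancel₀ hd, mul_one]
    obtain ⟨m, hm⟩ := hint y
    rw [hfy] at hm
    have h1 : (2:ℝ) * m = 1 := by rw [← hm]; norm_num
    have h2 : (2:ℤ) * m = 1 := by exact_mod_cast h1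
    omega
  · -- surjective
    rintro ⟨χ, hcχ, hmχ⟩
    obtain ⟨f, hf⟩ := exists_lift' χ hcχ hmχ
    exact ⟨f, Subtype.ext (funext fun x => (hf x).symm)⟩
  · intro f g x
    rw [← Circle.exp_add]
    simp only [ContinuousLinearMap.add_apply]
    ring_nf
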